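/- Let |1⟩,|2⟩,|3⟩ be the standard orthonormal basis of ℂ³ and |ψ⟩ = (|1⟩+|2⟩+|3⟩)/√3. Define A_i = (1/2)(1 − |i⟩⟨i|) for i = 1,2,3, B_1 = (1/2)|ψ⟩⟨ψ|, B_2 = 1 − B_1, and the 5-tuple M = ((1/2)|1⟩⟨1|, (1/2)|2⟩⟨2|, (1/2)|3⟩⟨3|, B_1, (1/2)·1 − B_1). Then M is a 5-outcome POVM, and for every subset X ⊆ {1,2,3} there is a subset Z ⊆ {1,…,5} with ∑_{i∈X} A_i = ∑_{l∈Z} M_l, and for every subset Y ⊆ {1,2} there is a subset Z' ⊆ {1,…,5} with ∑_{j∈Y} B_j = ∑_{l∈Z'} M_l. In particular, the POVMs A = (A_1,A_2,A_3) and B = (B_1,B_2) are coexistent. -/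

import Mathlib

open Matrix Finset
open scoped ComplexOrder

/-- An effect on `ℂ^d`: a matrix `E` with `0 ≤ E ≤ 1`, i.e. both `E` and `1 - E`
are positive semidefinite. -/
def IsEffect {d : ℕ} (E : Matrix (Fin d) (Fin d) ℂ) : Prop :=
  E.PosSemidef ∧ (1 - E).PosSemidef

/-- An `n`-outcome POVM: a tuple of effects summing to the identity. -/
def IsPOVM {d n : ℕ} (A : Fin n → Matrix (Fin d) (Fin d) ℂ) : Prop :=
  (∀ k, IsEffect (A k)) ∧ ∑ k, A k = 1

/-- Two finite POVMs are coexistent if their ranges (sums of effects over arbitrary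
outcome subsets) are contained in the range of a single POVM `M`. -/
def Coexistent {d n m : ℕ} (A : Fin n → Matrix (Fin d) (Fin d) ℂ)
    (B : Fin m → Matrix (Fin d) (Fin d) ℂ) : Prop :=
  ∃ (N : ℕ) (M : Fin N → Matrix (Fin d) (Fin d) ℂ), IsPOVM M ∧
    (∀ X : Finset (Fin n), ∃ Z : Finset (Fin N), ∑ k ∈ X, A k = ∑ l ∈ Z, M l) ∧
    (∀ Y : Finset (Fin m), ∃ Z : Finset (Fin N), ∑ j ∈ Y, B j = ∑ l ∈ Z, M l)

/-- Two finite POVMs are jointly measurable if they are the margins of a single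
POVM `J` indexed by pairs of outcomes. -/
def JointlyMeasurable {d n m : ℕ} (A : Fin n → Matrix (Fin d) (Fin d) ℂ)
    (B : Fin m → Matrix (Fin d) (Fin d) ℂ) : Prop :=
  ∃ J : Fin n → Fin m → Matrix (Fin d) (Fin d) ℂ,
    (∀ k j, (J k j).PosSemidef) ∧
    (∀ k, ∑ j, J k j = A k) ∧
    (∀ j, ∑ k, J k j = B j)

/-- The unit vector `|ψ⟩ = (|1⟩ + |2⟩ + |3⟩)/√3` in `ℂ³`. -/
noncomputable def ψ : Fin 3 → ℂ := fun _ => 1 / (Real.sqrt 3 : ℂ)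

/-- The effects `A_i = (1/2)(1 - |i⟩⟨i|)` on `ℂ³`. -/
noncomputable def Aeff (i : Fin 3) : Matrix (Fin 3) (Fin 3) ℂ :=
  (1 / 2 : ℂ) • (1 - Matrix.single i i 1)

/-- The effect `B_1 = (1/2)|ψ⟩⟨ψ|` on `ℂ³`. -/
noncomputable def Beff : Matrix (Fin 3) (Fin 3) ℂ :=
  (1 / 2 : ℂ) • Matrix.vecMulVec ψ (star ψ)

/-- The 5-outcome observable `M` whose range contains all effects of `A` and `B`. -/
noncomputable def Mobs : Fin 5 → Matrix (Fin 3) (Fin 3) ℂ :=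
  ![(1 / 2 : ℂ) • Matrix.single 0 0 1,
    (1 / 2 : ℂ) • Matrix.single 1 1 1,
    (1 / 2 : ℂ) • Matrix.single 2 2 1,
    Beff,
    (1 / 2 : ℂ) • 1 - Beff]

lemma Beff_apply (i j : Fin 3) : Beff i j = 1/6 := by
  have h3 : ((Real.sqrt 3 : ℝ) : ℂ) * ((Real.sqrt 3 : ℝ) : ℂ) = 3 := by
    norm_cast
    rw [Real.mul_self_sqrt] <;> norm_num
  simp [Beff, vecMulVec_apply, ψ, Complex.conj_ofReal]
  field_simp
  linear_combination (-2 : ℂ) * h3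

lemma psd_smul {n : ℕ} {M : Matrix (Fin n) (Fin n) ℂ} (hM : M.PosSemidef) (r : ℝ) (hr : 0 ≤ r) :
    (((r : ℝ) : ℂ) • M).PosSemidef := by
  constructor
  · unfold Matrix.IsHermitian
    rw [conjTranspose_smul, hM.1.eq]
    congr 1
    simp [Complex.conj_ofReal]
  · exact (hM.smul (by exact_mod_cast Complex.zero_le_real.mpr hr)).2

/-- the all-`1/3` matrix, i.e. `|ψ⟩⟨ψ|`. -/
noncomputable def Qm : Matrix (Fin 3) (Fin 3) ℂ := Matrix.of fun _ _ => (1/3 : ℂ)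

lemma Mobs_psd (k : Fin 5) : (Mobs k).PosSemidef := by
  fin_cases k
  · have h : Mobs 0 = ((1/2 : ℝ) : ℂ) •
        ((Matrix.single (0 : Fin 3) 0 (1:ℂ))ᴴ * Matrix.single 0 0 1) := by
      ext i j
      fin_cases i <;> fin_cases j <;>
        simp [Mobs, Matrix.mul_apply, Fin.sum_univ_three, Matrix.single]
    exact h ▸ psd_smul (posSemidef_conjTranspose_mul_self _) _ (by norm_num)
  · have h : Mobs 1 = ((1/2 : ℝ) : ℂ) •
        ((Matrix.single (1 : Fin 3) 1 (1:ℂ))ᴴ * Matrix.single 1 1 1) := by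
      ext i j
      fin_cases i <;> fin_cases j <;>
        simp [Mobs, Matrix.mul_apply, Fin.sum_univ_three, Matrix.single]
    exact h ▸ psd_smul (posSemidef_conjTranspose_mul_self _) _ (by norm_num)
  · have h : Mobs 2 = ((1/2 : ℝ) : ℂ) •
        ((Matrix.single (2 : Fin 3) 2 (1:ℂ))ᴴ * Matrix.single 2 2 1) := by
      ext i j
      fin_cases i <;> fin_cases j <;>
        simp [Mobs, Matrix.mul_apply, Fin.sum_univ_three, Matrix.single]
    exact h ▸ psd_smul (posSemidef_conjTranspose_mul_self _) _ (by norm_num)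
  · have h : Mobs 3 = ((1/2 : ℝ) : ℂ) • (Qmᴴ * Qm) := by
      ext i j
      fin_cases i <;> fin_cases j <;>
        simp [show Mobs 3 = Beff from rfl, Beff_apply, Matrix.mul_apply, Fin.sum_univ_three, Qm] <;> norm_num
    exact h ▸ psd_smul (posSemidef_conjTranspose_mul_self _) _ (by norm_num)
  · have h : Mobs 4 = ((1/2 : ℝ) : ℂ) • ((1 - Qm)ᴴ * (1 - Qm)) := by
      ext i j
      fin_cases i <;> fin_cases j <;>
        simp [Mobs, Beff_apply, Matrix.mul_apply, Fin.sum_univ_three, Qm,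
          Matrix.one_apply] <;> norm_num
    exact h ▸ psd_smul (posSemidef_conjTranspose_mul_self _) _ (by norm_num)

lemma Mobs_sum : ∑ k, Mobs k = 1 := by
  ext i j
  fin_cases i <;> fin_cases j <;>
    simp [Fin.sum_univ_five, Mobs, Beff_apply, Matrix.single, Matrix.one_apply] <;>
    norm_num

lemma Mobs_sum_psd (s : Finset (Fin 5)) : (∑ l ∈ s, Mobs l).PosSemidef :=
  Finset.sum_induction _ _ (fun _ _ ha hb => ha.add hb) Matrix.PosSemidef.zero
    (fun i _ => Mobs_psd i)

lemma Mobs_povm : IsPOVM Mobs := by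
  refine ⟨fun k => ⟨Mobs_psd k, ?_⟩, Mobs_sum⟩
  have h : (1 : Matrix (Fin 3) (Fin 3) ℂ) - Mobs k = ∑ l ∈ {k}ᶜ, Mobs l := by
    have h2 := Finset.sum_compl_add_sum {k} Mobs
    rw [Mobs_sum] at h2
    rw [← h2, Finset.sum_singleton]
    abel
  rw [h]
  exact Mobs_sum_psd _

set_option maxHeartbeats 1000000 in
lemma hA_sum : ∀ X : Finset (Fin 3), ∃ Z : Finset (Fin 5),
    ∑ i ∈ X, Aeff i = ∑ l ∈ Z, Mobs l := by
  intro X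
  fin_cases X
  · exact ⟨∅, by simp⟩
  · refine ⟨{1, 2}, ?_⟩
    ext i j
    fin_cases i <;> fin_cases j <;>
      simp [Aeff, Mobs, Beff_apply, Matrix.single, Matrix.one_apply] <;> norm_num
  · refine ⟨{0, 2}, ?_⟩
    ext i j
    fin_cases i <;> fin_cases j <;>
      simp [Aeff, Mobs, Beff_apply, Matrix.single, Matrix.one_apply] <;> norm_num
  · refine ⟨{2, 3, 4}, ?_⟩
    ext i j
    fin_cases i <;> fin_cases j <;>
      simp [Aeff, Mobs, Beff_apply, Matrix.single, Matrix.one_apply] <;> norm_num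
  · refine ⟨{0, 1}, ?_⟩
    ext i j
    fin_cases i <;> fin_cases j <;>
      simp [Aeff, Mobs, Beff_apply, Matrix.single, Matrix.one_apply] <;> norm_num
  · refine ⟨{1, 3, 4}, ?_⟩
    ext i j
    fin_cases i <;> fin_cases j <;>
      simp [Aeff, Mobs, Beff_apply, Matrix.single, Matrix.one_apply] <;> norm_num
  · refine ⟨{0, 3, 4}, ?_⟩
    ext i j
    fin_cases i <;> fin_cases j <;>
      simp [Aeff, Mobs, Beff_apply, Matrix.single, Matrix.one_apply] <;> norm_num
  · refine ⟨{0, 1, 2, 3, 4}, ?_⟩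
    ext i j
    fin_cases i <;> fin_cases j <;>
      simp [Aeff, Mobs, Beff_apply, Matrix.single, Matrix.one_apply] <;> norm_num

set_option maxHeartbeats 1000000 in
lemma hB_sum : ∀ Y : Finset (Fin 2), ∃ Z : Finset (Fin 5),
    ∑ j ∈ Y, (![Beff, 1 - Beff]) j = ∑ l ∈ Z, Mobs l := by
  intro Y
  fin_cases Y
  · exact ⟨∅, by simp⟩
  · refine ⟨{3}, ?_⟩
    ext i j
    fin_cases i <;> fin_cases j <;>
      simp [show Mobs 3 = Beff from rfl, Beff_apply, Matrix.one_apply] <;> norm_num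
  · refine ⟨{0, 1, 2, 4}, ?_⟩
    ext i j
    fin_cases i <;> fin_cases j <;>
      simp [Mobs, Beff_apply, Matrix.single, Matrix.one_apply] <;> norm_num
  · refine ⟨{0, 1, 2, 3, 4}, ?_⟩
    ext i j
    fin_cases i <;> fin_cases j <;>
      simp [Mobs, Beff_apply, Matrix.single, Matrix.one_apply] <;> norm_num

/-- `M` is a POVM, every subset-sum of the effects of `A` and of `B` is a subset-sum of the
effects of `M`, and in particular `A` and `B` are coexistent. -/
theorem Mobs_witnesses_coexistence :
    IsPOVM Mobs ∧
    (∀ X : Finset (Fin 3), ∃ Z : Finset (Fin 5), ∑ i ∈ X, Aeff i = ∑ l ∈ Z, Mobs l) ∧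
    (∀ Y : Finset (Fin 2), ∃ Z : Finset (Fin 5),
      ∑ j ∈ Y, (![Beff, 1 - Beff]) j = ∑ l ∈ Z, Mobs l) ∧
    Coexistent Aeff ![Beff, 1 - Beff] := by
  exact ⟨Mobs_povm, hA_sum, hB_sum, ⟨5, Mobs, Mobs_povm, hA_sum, hB_sum⟩⟩
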